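/- (First arrow.) The distributed ADMM iterates satisfy ‖x_⊥^k‖ ≤ (1/μ)‖ã^k + ρΔy^k‖ for all k ≥ 1; consequently, for every λ ∈ (0,1) and every K ≥ 0, ‖x_⊥‖^{λ,K} ≤ (1/μ)‖ã + ρΔy‖^{λ,K}. -/

import Mathlib

open Matrix
open scoped RealInnerProductSpace

/-- The averaging matrix `P = (1/n)·11ᵀ`. -/
noncomputable def avgMatrix (n : ℕ) : Matrix (Fin n) (Fin n) ℝ :=
  Matrix.of fun _ _ => (n : ℝ)⁻¹

/-- Action of a matrix on a vector of `ℝⁿ` with the Euclidean norm. -/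
noncomputable def mulE {n : ℕ} (M : Matrix (Fin n) (Fin n) ℝ)
    (v : EuclideanSpace ℝ (Fin n)) : EuclideanSpace ℝ (Fin n) :=
  Matrix.toEuclideanLin M v

/-- Induced 2-norm of a matrix. -/
noncomputable def opNorm2 {n : ℕ} (M : Matrix (Fin n) (Fin n) ℝ) : ℝ :=
  ‖LinearMap.toContinuousLinearMap (Matrix.toEuclideanLin M)‖

/-- `‖s‖^{λ,K} = max_{0 ≤ k ≤ K} ‖s^k‖/λ^k`. -/
noncomputable def seqNormK {n : ℕ} (s : ℕ → EuclideanSpace ℝ (Fin n)) (lam : ℝ) (K : ℕ) : ℝ :=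
  (Finset.range (K + 1)).sup' Finset.nonempty_range_add_one (fun k => ‖s k‖ / lam ^ k)

lemma mulE_apply {n : ℕ} (M : Matrix (Fin n) (Fin n) ℝ) (v : EuclideanSpace ℝ (Fin n))
    (i : Fin n) : mulE M v i = ∑ j, M i j * v j := rfl

lemma mulE_sub {n : ℕ} (M : Matrix (Fin n) (Fin n) ℝ) (u w : EuclideanSpace ℝ (Fin n)) :
    mulE M (u - w) = mulE M u - mulE M w := by
  simp [mulE, map_sub]

lemma avg_proj_contract {n : ℕ} (hn : 1 ≤ n) (v : EuclideanSpace ℝ (Fin n)) :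
    ‖v - mulE (avgMatrix n) v‖ ≤ ‖v‖ := by
  have hn' : (n : ℝ) ≠ 0 := Nat.cast_ne_zero.mpr (by omega)
  set c : ℝ := (n : ℝ)⁻¹ * ∑ j, v j with hc
  have hPv : ∀ i, mulE (avgMatrix n) v i = c := by
    intro i
    simp [mulE_apply, avgMatrix, hc, Finset.mul_sum]
  have horth : ⟪v, mulE (avgMatrix n) v⟫ = ‖mulE (avgMatrix n) v‖ ^ 2 := by
    rw [InnerProductSpace.norm_sq_eq_re_inner (𝕜 := ℝ)]
    rw [PiLp.inner_apply, PiLp.inner_apply]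
    simp only [RCLike.inner_apply, conj_trivial, hPv, RCLike.re_to_real]
    have : ∑ i : Fin n, c * v i = c * (∑ i : Fin n, v i) := by
      rw [Finset.mul_sum]
    rw [this, hc]
    simp only [Finset.sum_const, Finset.card_univ, Fintype.card_fin, nsmul_eq_mul]
    field_simp
  have hsq : ‖v - mulE (avgMatrix n) v‖ ^ 2 ≤ ‖v‖ ^ 2 := by
    rw [@norm_sub_sq_real]
    nlinarith [sq_nonneg ‖mulE (avgMatrix n) v‖]
  nlinarith [hsq, norm_nonneg v, norm_nonneg (v - mulE (avgMatrix n) v)]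


/-- **First arrow: `ã + ρΔy → x_⊥` with gain `1/μ`.** -/
theorem admm_first_arrow {n : ℕ} (hn : 1 ≤ n)
    (f : EuclideanSpace ℝ (Fin n) → ℝ)
    (f' : EuclideanSpace ℝ (Fin n) → EuclideanSpace ℝ (Fin n))
    (μ L : ℝ) (hμ : 0 < μ) (hL : 0 < L)
    (hgrad : ∀ z, HasGradientAt f (f' z) z)
    (hsc : ∀ z w, f z + ⟪f' z, w - z⟫ + μ / 2 * ‖w - z‖ ^ 2 ≤ f w)
    (hlip : ∀ z w, ‖f' z - f' w‖ ≤ L * ‖z - w‖)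
    (W : Matrix (Fin n) (Fin n) ℝ)
    (hWrow : W *ᵥ (fun _ => (1 : ℝ)) = fun _ => 1)
    (hWcol : Wᵀ *ᵥ (fun _ => (1 : ℝ)) = fun _ => 1)
    (hδ : opNorm2 (W - avgMatrix n) < 1)
    (ρ : ℝ) (hρ : 0 < ρ) (B : ℕ) (hB : 1 ≤ B)
    (x y a : ℕ → EuclideanSpace ℝ (Fin n))
    (hx0 : x 0 = 0) (hy0 : y 0 = 0) (ha0 : a 0 = 0)
    (hxup : ∀ k, f' (x (k + 1)) + a k + ρ • (x (k + 1) - y k) = 0)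
    (hyup : ∀ k, y (k + 1) = mulE (W ^ B) (x (k + 1)))
    (haup : ∀ k, a (k + 1) = a k + ρ • (x (k + 1) - y (k + 1)))
    (xstar : EuclideanSpace ℝ (Fin n))
    (hxstar_cons : mulE (avgMatrix n) xstar = xstar)
    (hxstar_min : ∀ z, mulE (avgMatrix n) z = z → f xstar ≤ f z)
    (astar : EuclideanSpace ℝ (Fin n)) (hastar : astar = -f' xstar) :
    (∀ k, 1 ≤ k →
      ‖x k - mulE (avgMatrix n) (x k)‖ ≤ 1 / μ * ‖(a k - astar) + ρ • (y k - y (k - 1))‖) ∧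
    (∀ lam : ℝ, lam ∈ Set.Ioo (0 : ℝ) 1 → ∀ K : ℕ,
      seqNormK (fun k => x k - mulE (avgMatrix n) (x k)) lam K ≤
        1 / μ * seqNormK (fun k => (a k - astar) + ρ • (y k - y (k - 1))) lam K) := by
  -- monotonicity of the gradient from strong convexity
  have mono : ∀ z w, μ * ‖w - z‖ ^ 2 ≤ ⟪f' w - f' z, w - z⟫ := by
    intro z w
    have h1 := hsc z w
    have h2 := hsc w z
    have e1 : ⟪f' w - f' z, w - z⟫ = ⟪f' w, w - z⟫ - ⟪f' z, w - z⟫ := inner_sub_left _ _ _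
    have e2 : ⟪f' w, z - w⟫ = -⟪f' w, w - z⟫ := by
      rw [← inner_neg_right]; congr 1; abel
    have e3 : ‖z - w‖ = ‖w - z‖ := norm_sub_rev _ _
    rw [e2, e3] at h2
    nlinarith
  -- the key pointwise bound
  have key : ∀ k, 1 ≤ k →
      ‖x k - mulE (avgMatrix n) (x k)‖ ≤ 1 / μ * ‖(a k - astar) + ρ • (y k - y (k - 1))‖ := by
    intro k hk
    obtain ⟨m, rfl⟩ : ∃ m, k = m + 1 := ⟨k - 1, by omega⟩
    have hsub : (m + 1) - 1 = m := rfl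
    set g : EuclideanSpace ℝ (Fin n) := (a (m + 1) - astar) + ρ • (y (m + 1) - y m) with hg
    set d : EuclideanSpace ℝ (Fin n) := x (m + 1) - xstar with hd
    -- gradient identity
    have hfd : f' (x (m + 1)) - f' xstar = -g := by
      have h1 := hxup m
      have h2 := haup m
      rw [hg, hastar, h2]
      have := h1
      -- f'(x(m+1)) = -(a m) - ρ•(x(m+1) - y m)
      have hfx : f' (x (m + 1)) = -(a m) - ρ • (x (m + 1) - y m) := by
        have : f' (x (m + 1)) = f' (x (m + 1)) + a m + ρ • (x (m + 1) - y m)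
            - a m - ρ • (x (m + 1) - y m) := by abel
        rw [this, h1]; abel
      rw [hfx]
      simp only [smul_sub]
      abel
    -- strong monotonicity at (xstar, x(m+1))
    have hmono := mono xstar (x (m + 1))
    rw [hfd] at hmono
    have hcs : ⟪-g, x (m + 1) - xstar⟫ ≤ ‖g‖ * ‖d‖ := by
      calc ⟪-g, x (m + 1) - xstar⟫ ≤ ‖-g‖ * ‖x (m + 1) - xstar‖ := real_inner_le_norm _ _
        _ = ‖g‖ * ‖d‖ := by rw [norm_neg, hd]
    have hdg : μ * ‖d‖ ≤ ‖g‖ := by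
      rcases eq_or_lt_of_le (norm_nonneg d) with h0 | h0
      · rw [← h0, mul_zero]; exact norm_nonneg g
      · have : μ * ‖d‖ ^ 2 ≤ ‖g‖ * ‖d‖ := by
          calc μ * ‖d‖ ^ 2 = μ * ‖x (m + 1) - xstar‖ ^ 2 := by rw [hd]
            _ ≤ ⟪-g, x (m + 1) - xstar⟫ := hmono
            _ ≤ ‖g‖ * ‖d‖ := hcs
        nlinarith
    -- relate x_⊥ to d
    have hxperp : x (m + 1) - mulE (avgMatrix n) (x (m + 1)) = d - mulE (avgMatrix n) d := by
      rw [hd, mulE_sub, hxstar_cons]; abel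
    calc ‖x (m + 1) - mulE (avgMatrix n) (x (m + 1))‖
        = ‖d - mulE (avgMatrix n) d‖ := by rw [hxperp]
      _ ≤ ‖d‖ := avg_proj_contract hn d
      _ ≤ 1 / μ * ‖g‖ := by
          rw [div_mul_eq_mul_div, le_div_iff₀ hμ]
          linarith [hdg]
      _ = 1 / μ * ‖(a (m + 1) - astar) + ρ • (y (m + 1) - y ((m + 1) - 1))‖ := by
          rw [hsub]
  refine ⟨key, ?_⟩
  intro lam hlam K
  have hlam0 : 0 < lam := hlam.1
  rw [seqNormK]
  apply Finset.sup'_le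
  intro k hkmem
  have hle : ‖(fun k => (a k - astar) + ρ • (y k - y (k - 1))) k‖ / lam ^ k ≤
      seqNormK (fun k => (a k - astar) + ρ • (y k - y (k - 1))) lam K := by
    rw [seqNormK]
    exact Finset.le_sup' (fun j => ‖(fun k => (a k - astar) + ρ • (y k - y (k - 1))) j‖ / lam ^ j) hkmem
  have hsup_nonneg : 0 ≤ seqNormK (fun k => (a k - astar) + ρ • (y k - y (k - 1))) lam K := by
    refine le_trans ?_ hle
    positivity
  rcases Nat.eq_zero_or_pos k with rfl | hk
  · have : x 0 - mulE (avgMatrix n) (x 0) = 0 := by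
      rw [hx0]; simp [mulE]
    simp only [this, norm_zero, zero_div]
    exact mul_nonneg (by positivity) hsup_nonneg
  · have h1 := key k hk
    calc ‖x k - mulE (avgMatrix n) (x k)‖ / lam ^ k
        ≤ (1 / μ * ‖(a k - astar) + ρ • (y k - y (k - 1))‖) / lam ^ k := by
          gcongr
      _ = 1 / μ * (‖(a k - astar) + ρ • (y k - y (k - 1))‖ / lam ^ k) := by
          ring
      _ ≤ 1 / μ * seqNormK (fun k => (a k - astar) + ρ • (y k - y (k - 1))) lam K :=
          mul_le_mul_of_nonneg_left hle (by positivity)
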